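/- Let d ≥ 1 be an integer, and let 0 ≤ j ≤ j' < k' ≤ k ≤ d and 1 ≤ l ≤ k'−j'−1 be integers. For every complex number z with Im z > 0, if A(j',k';z) = lπ, then π ≤ A(j,k;z) ≤ (k−j−1)π. -/

import Mathlib

/-- The angle sum `A(j,k;z) = Σ_{m=j}^{k-1} (arg(z-m) - arg(z+d-m))`. -/
noncomputable def angleSum (d j k : ℕ) (z : ℂ) : ℝ :=
  ∑ m ∈ Finset.Icc j (k - 1), (Complex.arg (z - m) - Complex.arg (z + d - m))

lemma ratio_mono {x₁ x₂ y : ℝ} (hy : 0 < y) (h : x₁ < x₂) :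
    x₁ / Real.sqrt (x₁^2 + y^2) < x₂ / Real.sqrt (x₂^2 + y^2) := by
  have ha : 0 < Real.sqrt (x₁^2 + y^2) := Real.sqrt_pos.2 (by positivity)
  have hb : 0 < Real.sqrt (x₂^2 + y^2) := Real.sqrt_pos.2 (by positivity)
  have ha2 : Real.sqrt (x₁^2 + y^2) ^ 2 = x₁^2 + y^2 := Real.sq_sqrt (by positivity)
  have hb2 : Real.sqrt (x₂^2 + y^2) ^ 2 = x₂^2 + y^2 := Real.sq_sqrt (by positivity)
  rw [div_lt_div_iff₀ ha hb]
  set a := Real.sqrt (x₁^2 + y^2)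
  set b := Real.sqrt (x₂^2 + y^2)
  rcases le_or_gt 0 x₁ with h1 | h1
  · have hx2 : 0 < x₂ := lt_of_le_of_lt h1 h
    have hxx : x₁^2 < x₂^2 := by nlinarith
    have hsq : (x₁*b)^2 < (x₂*a)^2 := by
      rw [mul_pow, mul_pow, ha2, hb2]
      nlinarith [mul_pos (sub_pos.2 hxx) (mul_pos hy hy)]
    exact lt_of_pow_lt_pow_left₀ 2 (mul_pos hx2 ha).le hsq
  · rcases le_or_gt 0 x₂ with h2 | h2
    · nlinarith [mul_pos (neg_pos.2 h1) hb, mul_nonneg h2 ha.le]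
    · have hxx : x₂^2 < x₁^2 := by nlinarith
      have hsq : ((-x₂)*a)^2 < ((-x₁)*b)^2 := by
        rw [mul_pow, mul_pow, ha2, hb2]
        nlinarith [mul_pos (sub_pos.2 hxx) (mul_pos hy hy)]
      have := lt_of_pow_lt_pow_left₀ 2 (mul_nonneg (neg_nonneg.2 h1.le) hb.le) hsq
      linarith

lemma arg_lt_arg_of_re {w₁ w₂ : ℂ} (him : w₁.im = w₂.im) (h : 0 < w₁.im)
    (hre : w₁.re < w₂.re) : w₂.arg < w₁.arg := by
  have h2 : 0 < w₂.im := him ▸ h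
  have hw1 : w₁ ≠ 0 := fun e => by simp [e] at h
  have hw2 : w₂ ≠ 0 := fun e => by simp [e] at h2
  rw [Complex.arg_of_im_pos h, Complex.arg_of_im_pos h2]
  have hmem : ∀ w : ℂ, w ≠ 0 → w.re / ‖w‖ ∈ Set.Icc (-1 : ℝ) 1 := by
    intro w hw
    have := Complex.abs_re_le_norm w
    have hpos := norm_pos_iff.mpr hw
    constructor
    · rw [le_div_iff₀ hpos]; nlinarith [abs_le.1 this]
    · rw [div_le_one hpos]; exact (abs_le.1 this).2
  apply Real.strictAntiOn_arccos (hmem _ hw1) (hmem _ hw2)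
  have h1 : ‖w₁‖ = Real.sqrt (w₁.re^2 + w₁.im^2) := by
    rw [Complex.norm_def, Complex.normSq_apply]; ring_nf
  have h2' : ‖w₂‖ = Real.sqrt (w₂.re^2 + w₂.im^2) := by
    rw [Complex.norm_def, Complex.normSq_apply]; ring_nf
  rw [h1, h2', ← him]
  exact ratio_mono h hre

lemma term_pos {d : ℕ} (hd : 1 ≤ d) {z : ℂ} (hz : 0 < z.im) (m : ℕ) :
    0 < Complex.arg (z - m) - Complex.arg (z + d - m) := by
  have := arg_lt_arg_of_re (w₁ := z - m) (w₂ := z + d - m) (by simp) (by simpa using hz)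
    (by simp; omega)
  linarith

lemma term_lt_pi {d : ℕ} {z : ℂ} (hz : 0 < z.im) (m : ℕ) :
    Complex.arg (z - m) - Complex.arg (z + d - m) < Real.pi := by
  have h1 : Complex.arg (z - m) < Real.pi := by
    rw [Complex.arg_lt_pi_iff]; right; simp; linarith
  have h2 : 0 < Complex.arg (z + d - m) := by
    have him : (z + d - m).im = z.im := by simp
    have hnn : 0 ≤ Complex.arg (z + d - m) := Complex.arg_nonneg_iff.2 (by rw [him]; linarith)
    rcases hnn.lt_or_eq with h | h
    · exact h
    · exfalso
      have := (Complex.arg_eq_zero_iff.1 h.symm).2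
      rw [him] at this; linarith
  linarith

/-- First containment of Proposition 4.7: the curve `𝒟_{j',k'}` lies in
`cl 𝒟_{j,k;1} ∖ cl 𝒟_{j,k;k-j-1}` (in the upper half-plane). -/
theorem stmt_12 (d j j' k' k l : ℕ) (hd : 1 ≤ d) (hjj' : j ≤ j') (hj'k' : j' < k')
    (hk'k : k' ≤ k) (hkd : k ≤ d) (hl : 1 ≤ l) (hl' : l ≤ k' - j' - 1)
    (z : ℂ) (hz : 0 < z.im)
    (hA : angleSum d j' k' z = l * Real.pi) :
    Real.pi ≤ angleSum d j k z ∧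
      angleSum d j k z ≤ ((k - j - 1 : ℕ) : ℝ) * Real.pi := by
  set f : ℕ → ℝ := fun m => Complex.arg (z - m) - Complex.arg (z + d - m) with hf
  have hIcc : ∀ a b : ℕ, 1 ≤ b → Finset.Icc a (b - 1) = Finset.Ico a b := by
    intro a b hb
    rw [← Finset.Ico_add_one_right_eq_Icc]
    congr 1
    omega
  have hsum : ∀ a b : ℕ, 1 ≤ b → angleSum d a b z = ∑ m ∈ Finset.Ico a b, f m := by
    intro a b hb; rw [angleSum, hIcc a b hb]
  have hk' : 1 ≤ k' := by omega
  have hk : 1 ≤ k := by omega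
  rw [hsum j k hk]
  rw [hsum j' k' hk'] at hA
  have hjk' : j ≤ k' := by omega
  have split : ∑ m ∈ Finset.Ico j k, f m =
      ∑ m ∈ Finset.Ico j j', f m + ∑ m ∈ Finset.Ico j' k', f m + ∑ m ∈ Finset.Ico k' k, f m := by
    rw [← Finset.sum_Ico_consecutive f hjk' hk'k, ← Finset.sum_Ico_consecutive f hjj' hj'k'.le]
  have hS1 : 0 ≤ ∑ m ∈ Finset.Ico j j', f m :=
    Finset.sum_nonneg fun m _ => (term_pos hd hz m).le
  have hS3 : 0 ≤ ∑ m ∈ Finset.Ico k' k, f m :=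
    Finset.sum_nonneg fun m _ => (term_pos hd hz m).le
  have hπ : 0 < Real.pi := Real.pi_pos
  have hl1 : (1 : ℝ) ≤ l := by exact_mod_cast hl
  constructor
  · rw [split, hA]; nlinarith
  · have hS1' : ∑ m ∈ Finset.Ico j j', f m ≤ ((j' - j : ℕ) : ℝ) * Real.pi := by
      calc ∑ m ∈ Finset.Ico j j', f m ≤ (Finset.Ico j j').card • Real.pi :=
            Finset.sum_le_card_nsmul _ _ _ fun m _ => (term_lt_pi hz m).le
        _ = ((j' - j : ℕ) : ℝ) * Real.pi := by rw [Nat.card_Ico, nsmul_eq_mul]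
    have hS3' : ∑ m ∈ Finset.Ico k' k, f m ≤ ((k - k' : ℕ) : ℝ) * Real.pi := by
      calc ∑ m ∈ Finset.Ico k' k, f m ≤ (Finset.Ico k' k).card • Real.pi :=
            Finset.sum_le_card_nsmul _ _ _ fun m _ => (term_lt_pi hz m).le
        _ = ((k - k' : ℕ) : ℝ) * Real.pi := by rw [Nat.card_Ico, nsmul_eq_mul]
    have hmid : ∑ m ∈ Finset.Ico j' k', f m ≤ ((k' - j' - 1 : ℕ) : ℝ) * Real.pi := by
      rw [hA]
      have : (l : ℝ) ≤ ((k' - j' - 1 : ℕ) : ℝ) := by exact_mod_cast hl'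
      nlinarith
    have hcard : (j' - j) + (k' - j' - 1) + (k - k') = k - j - 1 := by omega
    have hcast : ((j' - j : ℕ) : ℝ) + ((k' - j' - 1 : ℕ) : ℝ) + ((k - k' : ℕ) : ℝ)
        = ((k - j - 1 : ℕ) : ℝ) := by exact_mod_cast congrArg (Nat.cast : ℕ → ℝ) hcard
    rw [split]
    nlinarith
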